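/- (The two-filter formula.) For every 0 ≤ t ≤ T and every y ∈ E, the unnormalized smoothing marginal at time t, obtained by integrating U over all coordinates except the t-th (which is fixed to y), equals the product of the backward value function and the unnormalized filtering function: ∫_{E^{T}} U(x₀,…,x_{t−1}, y, x_{t+1},…,x_T) dμ^{⊗T}(x₀,…,x_{t−1},x_{t+1},…,x_T) = b_t(y) · π_t(y). -/

import Mathlib

open MeasureTheory ENNReal
open scoped ENNReal BigOperators
open Fin.NatCast

namespace TwoFilterAux

variable {E : Type*} [MeasurableSpace E]

/-- unnormalized filtering functions -/
noncomputable def piF (μ : Measure E) (u₀ : E → ℝ≥0∞) (u : ℕ → E × E → ℝ≥0∞) : ℕ → E → ℝ≥0∞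
  | 0 => u₀
  | (t+1) => fun y => ∫⁻ x, u (t+1) (x, y) * piF μ u₀ u t x ∂μ

/-- backward value functions: `Gb μ k u y` is the backward value with `k` steps to go,
using transitions `u 1, u 2, ..., u k`. -/
noncomputable def Gb (μ : Measure E) : ℕ → (ℕ → E × E → ℝ≥0∞) → E → ℝ≥0∞
  | 0, _ => fun _ => 1
  | (k+1), u => fun x => ∫⁻ a, u 1 (x, a) * Gb μ k (fun s => u (s+1)) a ∂μ

lemma measurable_piF (μ : Measure E) [SigmaFinite μ] {u₀ : E → ℝ≥0∞} (hu₀ : Measurable u₀)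
    {u : ℕ → E × E → ℝ≥0∞} (hu : ∀ s, Measurable (u s)) :
    ∀ t, Measurable (piF μ u₀ u t)
  | 0 => hu₀
  | (t+1) => by
    have ih := measurable_piF μ hu₀ hu t
    exact Measurable.lintegral_prod_right'
      (f := fun p : E × E => u (t+1) (p.2, p.1) * piF μ u₀ u t p.2)
      (((hu (t+1)).comp (measurable_snd.prodMk measurable_fst)).mul (ih.comp measurable_snd))

lemma measurable_Gb (μ : Measure E) [SigmaFinite μ] :
    ∀ (k : ℕ) (u : ℕ → E × E → ℝ≥0∞), (∀ s, Measurable (u s)) → Measurable (Gb μ k u)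
  | 0, _, _ => measurable_const
  | (k+1), u, hu => by
    have ih := measurable_Gb μ k (fun s => u (s+1)) (fun s => hu (s+1))
    exact Measurable.lintegral_prod_right'
      (f := fun p : E × E => u 1 (p.1, p.2) * Gb μ k (fun s => u (s+1)) p.2)
      ((hu 1).mul (ih.comp measurable_snd))

lemma measurable_insertNth {n : ℕ} (i : Fin (n+1)) (y : E) :
    Measurable fun w : Fin n → E => (Fin.insertNth i y w : Fin (n+1) → E) := by
  have h : (fun w : Fin n → E => (Fin.insertNth i y w : Fin (n+1) → E))
      = (MeasurableEquiv.piFinSuccAbove (fun _ : Fin (n+1) => E) i).symm ∘ fun w => (y, w) := by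
    funext w
    simp [MeasurableEquiv.piFinSuccAbove, Fin.insertNthEquiv]
  rw [h]
  exact (MeasurableEquiv.piFinSuccAbove (fun _ : Fin (n+1) => E) i).symm.measurable.comp
    (measurable_const.prodMk measurable_id)

lemma measurable_cons {n : ℕ} (y : E) :
    Measurable fun w : Fin n → E => (Fin.cons y w : Fin (n+1) → E) := by
  have h : (fun w : Fin n → E => (Fin.cons y w : Fin (n+1) → E))
      = fun w : Fin n → E => (Fin.insertNth 0 y w : Fin (n+1) → E) := by
    funext w; rw [Fin.insertNth_zero']
  rw [h]; exact measurable_insertNth 0 y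

lemma measurable_U {k m : ℕ} (u : ℕ → E × E → ℝ≥0∞) (hu : ∀ s, Measurable (u s))
    {h : (Fin k → E) → Fin (m+1) → E} (hh : Measurable h) (S : Finset ℕ) :
    Measurable fun w => ∏ s ∈ S, u s (h w ↑(s-1), h w ↑s) :=
  Finset.measurable_prod _ fun s _ =>
    (hu s).comp ((((measurable_pi_apply _).comp hh)).prodMk ((measurable_pi_apply _).comp hh))

lemma lint_cons (μ : Measure E) [SigmaFinite μ] {n : ℕ}
    (f : (Fin (n+1) → E) → ℝ≥0∞) (hf : Measurable f) :
    ∫⁻ w, f w ∂(Measure.pi fun _ : Fin (n+1) => μ)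
      = ∫⁻ a, ∫⁻ v, f (Fin.cons a v) ∂(Measure.pi fun _ : Fin n => μ) ∂μ := by
  have h := (measurePreserving_piFinSuccAbove (fun _ : Fin (n+1) => μ) 0).symm
  rw [← h.lintegral_comp hf]
  have h' : Measurable fun p : E × (Fin n → E) =>
      f ((MeasurableEquiv.piFinSuccAbove (fun _ : Fin (n+1) => E) 0).symm p) :=
    hf.comp (MeasurableEquiv.piFinSuccAbove (fun _ : Fin (n+1) => E) 0).symm.measurable
  rw [lintegral_prod _ h'.aemeasurable]
  congr 1
  funext a
  congr 1
  funext v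
  congr 1
  simp [MeasurableEquiv.piFinSuccAbove, Fin.insertNthEquiv, Fin.insertNth_zero']

lemma cast_succ_cast {n i : ℕ} (h : i < n+1) :
    ((i+1 : ℕ) : Fin (n+2)) = Fin.succ ((i : ℕ) : Fin (n+1)) := by
  apply Fin.ext
  simp only [Fin.val_succ, Fin.val_natCast]
  rw [Nat.mod_eq_of_lt (by omega), Nat.mod_eq_of_lt (by omega)]

lemma Icc_prod_range {M : Type*} [CommMonoid M] (f : ℕ → M) (m : ℕ) :
    ∏ s ∈ Finset.Icc 1 m, f s = ∏ i ∈ Finset.range m, f (i+1) := by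
  rw [← Finset.Ico_add_one_right_eq_Icc, Finset.prod_Ico_eq_prod_range]
  exact Finset.prod_congr rfl fun i _ => by rw [Nat.add_comm]

lemma prod_cons (u : ℕ → E × E → ℝ≥0∞) {n : ℕ} (a : E) (g : Fin (n+1) → E) :
    ∏ s ∈ Finset.Icc 1 (n+1),
        u s ((Fin.cons a g : Fin (n+2) → E) ↑(s-1), (Fin.cons a g : Fin (n+2) → E) ↑s)
      = u 1 (a, g 0) * ∏ s ∈ Finset.Icc 1 n, u (s+1) (g ↑(s-1), g ↑s) := by
  rw [Icc_prod_range, Icc_prod_range, Finset.prod_range_succ']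
  have key : ∀ i ∈ Finset.range n,
      u (i+1+1) ((Fin.cons a g : Fin (n+2) → E) ↑(i+1+1-1), (Fin.cons a g : Fin (n+2) → E) ↑(i+1+1))
        = u (i+1+1) (g ↑(i+1-1), g ↑(i+1)) := by
    intro i hi
    have hi' : i < n := Finset.mem_range.mp hi
    have e1 : ((i+1+1-1 : ℕ) : Fin (n+2)) = Fin.succ ((i:ℕ) : Fin (n+1)) := by
      have h : i+1+1-1 = i+1 := by omega
      rw [h]; exact cast_succ_cast (by omega)
    have e2 : ((i+1+1 : ℕ) : Fin (n+2)) = Fin.succ ((i+1:ℕ) : Fin (n+1)) :=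
      cast_succ_cast (by omega)
    have e3 : ((i+1-1 : ℕ) : Fin (n+1)) = ((i:ℕ) : Fin (n+1)) := by
      have h : i+1-1 = i := by omega
      rw [h]
    rw [e1, e2, e3, Fin.cons_succ, Fin.cons_succ]
  rw [Finset.prod_congr rfl key]
  have f1 : u (0+1) ((Fin.cons a g : Fin (n+2) → E) ((0+1-1 : ℕ) : Fin (n+2)),
        (Fin.cons a g : Fin (n+2) → E) ((0+1 : ℕ) : Fin (n+2)))
      = u 1 (a, g 0) := by
    have c0 : ((0+1-1 : ℕ) : Fin (n+2)) = 0 := by norm_num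
    have c1 : ((0+1 : ℕ) : Fin (n+2)) = Fin.succ ((0:ℕ) : Fin (n+1)) := cast_succ_cast (by omega)
    have c2 : ((0:ℕ) : Fin (n+1)) = 0 := by norm_num
    rw [c0, c1, c2, Fin.cons_succ, Fin.cons_zero]
  rw [f1, mul_comm]

lemma insertNth_succ_cons {n : ℕ} (i : Fin (n+1)) (y a : E) (w : Fin n → E) :
    (Fin.insertNth i.succ y (Fin.cons a w : Fin (n+1) → E) : Fin (n+2) → E)
      = Fin.cons a (Fin.insertNth i y w : Fin (n+1) → E) := by
  funext j
  refine Fin.cases ?_ (fun j' => ?_) j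
  · have h0 : (0 : Fin (n+2)) = Fin.succAbove i.succ 0 := by
      rw [Fin.succAbove_of_castSucc_lt]
      · simp
      · simpa [Fin.pos_iff_ne_zero] using Fin.succ_ne_zero i
    rw [h0, Fin.insertNth_apply_succAbove]
    simp
  · rw [Fin.cons_succ]
    refine Fin.succAboveCases (i := i) ?_ (fun m => ?_) j'
    · rw [show (Fin.succ i) = i.succ from rfl, Fin.insertNth_apply_same,
        Fin.insertNth_apply_same]
    · rw [← Fin.succ_succAbove_succ, Fin.insertNth_apply_succAbove,
        Fin.insertNth_apply_succAbove, Fin.cons_succ]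

lemma lint_gb (μ : Measure E) [SigmaFinite μ] :
    ∀ (k : ℕ) (u : ℕ → E × E → ℝ≥0∞), (∀ s, Measurable (u s)) → ∀ y : E,
    (∫⁻ w : Fin k → E, ∏ s ∈ Finset.Icc 1 k,
        u s ((Fin.cons y w : Fin (k+1) → E) ↑(s-1), (Fin.cons y w : Fin (k+1) → E) ↑s)
      ∂(Measure.pi fun _ : Fin k => μ)) = Gb μ k u y
  | 0, u, hu, y => by
    have he : Finset.Icc 1 0 = (∅ : Finset ℕ) := by simp
    simp [he, Gb, Measure.pi_univ]
  | (k+1), u, hu, y => by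
    rw [lint_cons μ _ (measurable_U u hu (measurable_cons y) _)]
    have inner : ∀ a : E,
        (∫⁻ v : Fin k → E, ∏ s ∈ Finset.Icc 1 (k+1),
            u s ((Fin.cons y (Fin.cons a v) : Fin (k+2) → E) ↑(s-1),
                 (Fin.cons y (Fin.cons a v) : Fin (k+2) → E) ↑s)
          ∂(Measure.pi fun _ : Fin k => μ))
          = u 1 (y, a) * Gb μ k (fun s => u (s+1)) a := by
      intro a
      have hcong : ∀ v : Fin k → E,
          (∏ s ∈ Finset.Icc 1 (k+1),
            u s ((Fin.cons y (Fin.cons a v) : Fin (k+2) → E) ↑(s-1),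
                 (Fin.cons y (Fin.cons a v) : Fin (k+2) → E) ↑s))
          = u 1 (y, a) * ∏ s ∈ Finset.Icc 1 k,
              (fun s' => u (s'+1)) s ((Fin.cons a v : Fin (k+1) → E) ↑(s-1),
                 (Fin.cons a v : Fin (k+1) → E) ↑s) := by
        intro v
        have := prod_cons u y (Fin.cons a v : Fin (k+1) → E)
        rw [this, Fin.cons_zero]
      rw [lintegral_congr hcong,
        lintegral_const_mul _ (measurable_U (fun s => u (s+1)) (fun s => hu (s+1))
          (measurable_cons a) _),
        lint_gb μ k (fun s => u (s+1)) (fun s => hu (s+1)) a]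
    rw [lintegral_congr inner]
    rfl

lemma piF_shift (μ : Measure E) [SigmaFinite μ] (u₀ : E → ℝ≥0∞) (u : ℕ → E × E → ℝ≥0∞) :
    ∀ (t : ℕ) (y : E),
      piF μ (fun e => ∫⁻ a, u₀ a * u 1 (a, e) ∂μ) (fun s => u (s+1)) t y
        = piF μ u₀ u (t+1) y
  | 0, y => by
    simp only [piF]
    exact lintegral_congr fun a => mul_comm _ _
  | (t+1), y => by
    simp only [piF]
    refine lintegral_congr fun x => ?_
    rw [piF_shift μ u₀ u t x]
    rfl

lemma main (μ : Measure E) [SigmaFinite μ] :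
    ∀ (t T : ℕ) (ht : t ≤ T) (u₀ : E → ℝ≥0∞), Measurable u₀ →
      ∀ (u : ℕ → E × E → ℝ≥0∞), (∀ s, Measurable (u s)) → ∀ y : E,
    (∫⁻ z : Fin T → E,
        u₀ ((Fin.insertNth ⟨t, Nat.lt_succ_of_le ht⟩ y z : Fin (T+1) → E) 0)
          * ∏ s ∈ Finset.Icc 1 T,
              u s ((Fin.insertNth ⟨t, Nat.lt_succ_of_le ht⟩ y z : Fin (T+1) → E) ↑(s-1),
                   (Fin.insertNth ⟨t, Nat.lt_succ_of_le ht⟩ y z : Fin (T+1) → E) ↑s)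
        ∂(Measure.pi fun _ : Fin T => μ))
      = Gb μ (T - t) (fun s => u (t+s)) y * piF μ u₀ u t y := by
  intro t
  induction t with
  | zero =>
    intro T ht u₀ hu₀ u hu y
    have h0 : (⟨0, Nat.lt_succ_of_le ht⟩ : Fin (T+1)) = 0 := by
      exact Fin.mk_zero
    simp only [h0, Fin.insertNth_zero', Fin.cons_zero]
    rw [lintegral_const_mul _ (measurable_U u hu (measurable_cons y) _)]
    rw [lint_gb μ T u hu y]
    have hfam : (fun s => u (0+s)) = u := funext fun s => by rw [Nat.zero_add]
    rw [Nat.sub_zero, hfam, mul_comm]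
    rfl
  | succ t ih =>
    intro T ht u₀ hu₀ u hu y
    cases T with
    | zero => exact absurd ht (by omega)
    | succ T' =>
      have ht' : t ≤ T' := by omega
      set i : Fin (T'+1) := ⟨t, Nat.lt_succ_of_le ht'⟩ with hi
      have hisucc : (⟨t+1, Nat.lt_succ_of_le ht⟩ : Fin (T'+2)) = Fin.succ i := rfl
      have hx : Measurable fun z : Fin (T'+1) → E =>
          (Fin.insertNth (⟨t+1, Nat.lt_succ_of_le ht⟩ : Fin (T'+2)) y z : Fin (T'+2) → E) :=
        measurable_insertNth _ y
      have hf : Measurable fun z : Fin (T'+1) → E =>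
          u₀ ((Fin.insertNth (⟨t+1, Nat.lt_succ_of_le ht⟩ : Fin (T'+2)) y z : Fin (T'+2) → E) 0)
            * ∏ s ∈ Finset.Icc 1 (T'+1),
                u s ((Fin.insertNth (⟨t+1, Nat.lt_succ_of_le ht⟩ : Fin (T'+2)) y z : Fin (T'+2) → E) ↑(s-1),
                     (Fin.insertNth (⟨t+1, Nat.lt_succ_of_le ht⟩ : Fin (T'+2)) y z : Fin (T'+2) → E) ↑s) :=
        (hu₀.comp ((measurable_pi_apply 0).comp hx)).mul (measurable_U u hu hx _)
      rw [lint_cons μ _ hf]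
      have step1 : ∀ a : E,
          (∫⁻ w : Fin T' → E,
            (u₀ ((Fin.insertNth (⟨t+1, Nat.lt_succ_of_le ht⟩ : Fin (T'+2)) y
                    (Fin.cons a w) : Fin (T'+2) → E) 0)
              * ∏ s ∈ Finset.Icc 1 (T'+1),
                  u s ((Fin.insertNth (⟨t+1, Nat.lt_succ_of_le ht⟩ : Fin (T'+2)) y
                          (Fin.cons a w) : Fin (T'+2) → E) ↑(s-1),
                       (Fin.insertNth (⟨t+1, Nat.lt_succ_of_le ht⟩ : Fin (T'+2)) y
                          (Fin.cons a w) : Fin (T'+2) → E) ↑s))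
            ∂(Measure.pi fun _ : Fin T' => μ))
          = ∫⁻ w : Fin T' → E,
              (u₀ a * u 1 (a, (Fin.insertNth i y w : Fin (T'+1) → E) 0))
                * ∏ s ∈ Finset.Icc 1 T',
                    u (s+1) ((Fin.insertNth i y w : Fin (T'+1) → E) ↑(s-1),
                             (Fin.insertNth i y w : Fin (T'+1) → E) ↑s)
            ∂(Measure.pi fun _ : Fin T' => μ) := by
        intro a
        refine lintegral_congr fun w => ?_
        rw [hisucc, insertNth_succ_cons, Fin.cons_zero, prod_cons, mul_assoc]
      rw [lintegral_congr step1]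
      have hins : Measurable fun w : Fin T' → E => (Fin.insertNth i y w : Fin (T'+1) → E) :=
        measurable_insertNth i y
      have hG : Measurable (Function.uncurry fun (a : E) (w : Fin T' → E) =>
          (u₀ a * u 1 (a, (Fin.insertNth i y w : Fin (T'+1) → E) 0))
            * ∏ s ∈ Finset.Icc 1 T',
                u (s+1) ((Fin.insertNth i y w : Fin (T'+1) → E) ↑(s-1),
                         (Fin.insertNth i y w : Fin (T'+1) → E) ↑s)) := by
        apply Measurable.mul
        · exact (hu₀.comp measurable_fst).mul ((hu 1).comp (measurable_fst.prodMk
            (((measurable_pi_apply 0).comp hins).comp measurable_snd)))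
        · exact (measurable_U (fun s => u (s+1)) (fun s => hu (s+1)) hins _).comp measurable_snd
      rw [lintegral_lintegral_swap hG.aemeasurable]
      have step2 : ∀ w : Fin T' → E,
          (∫⁻ a, (u₀ a * u 1 (a, (Fin.insertNth i y w : Fin (T'+1) → E) 0))
              * ∏ s ∈ Finset.Icc 1 T',
                  u (s+1) ((Fin.insertNth i y w : Fin (T'+1) → E) ↑(s-1),
                           (Fin.insertNth i y w : Fin (T'+1) → E) ↑s) ∂μ)
          = (∫⁻ a, u₀ a * u 1 (a, (Fin.insertNth i y w : Fin (T'+1) → E) 0) ∂μ)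
              * ∏ s ∈ Finset.Icc 1 T',
                  u (s+1) ((Fin.insertNth i y w : Fin (T'+1) → E) ↑(s-1),
                           (Fin.insertNth i y w : Fin (T'+1) → E) ↑s) := by
        intro w
        exact lintegral_mul_const _ (hu₀.mul ((hu 1).comp
          (measurable_id.prodMk measurable_const)))
      rw [lintegral_congr step2]
      have hu₀' : Measurable fun e => ∫⁻ a, u₀ a * u 1 (a, e) ∂μ :=
        Measurable.lintegral_prod_right'
          (f := fun p : E × E => u₀ p.2 * u 1 (p.2, p.1))
          ((hu₀.comp measurable_snd).mul ((hu 1).comp (measurable_snd.prodMk measurable_fst)))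
      have key := ih T' ht' (fun e => ∫⁻ a, u₀ a * u 1 (a, e) ∂μ) hu₀'
        (fun s => u (s+1)) (fun s => hu (s+1)) y
      have efam : (fun s => (fun s' => u (s'+1)) (t+s)) = fun s => u (t+1+s) :=
        funext fun s => by norm_num; ring_nf
      have esub : T' + 1 - (t + 1) = T' - t := by omega
      rw [esub, ← efam, ← piF_shift μ u₀ u t y]
      exact key
  
end TwoFilterAux

/-- **The two-filter formula.**
With `U x = u₀ (x 0) * ∏_{t=1}^T u t (x (t-1), x t)` the unnormalized posterior,
`b` the backward value functions (`b T ≡ 1`, `b (t-1) x = ∫ b t y * u t (x,y) μ(dy)`) and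
`π` the unnormalized filtering functions (`π 0 = u₀`, `π t y = ∫ u t (x,y) * π (t-1) x μ(dx)`),
for every `0 ≤ t ≤ T` and `y ∈ E`, integrating `U` over all coordinates except the `t`-th
(fixed to `y`) yields `b t y * π t y`. -/
theorem two_filter_formula
    {E : Type*} [MeasurableSpace E] (μ : Measure E) [SigmaFinite μ] (T : ℕ)
    (u₀ : E → ℝ≥0∞) (hu₀ : Measurable u₀)
    (u : ℕ → E × E → ℝ≥0∞) (hu : ∀ t, Measurable (u t))
    (b : ℕ → E → ℝ≥0∞)
    (hbT : ∀ x, b T x = 1)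
    (hbrec : ∀ t, 1 ≤ t → t ≤ T → ∀ x, b (t - 1) x = ∫⁻ y, b t y * u t (x, y) ∂μ)
    (π : ℕ → E → ℝ≥0∞)
    (hπ0 : ∀ x, π 0 x = u₀ x)
    (hπrec : ∀ t, 1 ≤ t → t ≤ T → ∀ y, π t y = ∫⁻ x, u t (x, y) * π (t - 1) x ∂μ) :
    ∀ t : ℕ, ∀ ht : t ≤ T, ∀ y : E,
      (∫⁻ z : Fin T → E,
          (let x : Fin (T + 1) → E := Fin.insertNth ⟨t, Nat.lt_succ_of_le ht⟩ y z
           u₀ (x 0) * ∏ s ∈ Finset.Icc 1 T, u s (x (Fin.ofNat (T + 1) (s - 1)), x (Fin.ofNat (T + 1) s)))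
          ∂(Measure.pi fun _ : Fin T => μ))
        = b t y * π t y := by
  have hGb : ∀ k t', t' + k = T → ∀ x, b t' x = TwoFilterAux.Gb μ k (fun s => u (t'+s)) x := by
    intro k
    induction k with
    | zero =>
      intro t' h x
      obtain rfl : t' = T := by omega
      simp [TwoFilterAux.Gb, hbT]
    | succ k ihk =>
      intro t' h x
      have hrec := hbrec (t'+1) (by omega) (by omega) x
      rw [Nat.add_sub_cancel] at hrec
      rw [hrec]
      show _ = TwoFilterAux.Gb μ (k+1) (fun s => u (t'+s)) x
      simp only [TwoFilterAux.Gb]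
      refine lintegral_congr fun a => ?_
      have htk : t' + 1 + k = T := by omega
      rw [ihk (t'+1) htk a]
      have hfam : (fun s => u (t'+(s+1))) = fun s => u (t'+1+s) :=
        funext fun s => congrArg u (by omega)
      rw [hfam, mul_comm]
  have hpi : ∀ t', t' ≤ T → ∀ y, π t' y = TwoFilterAux.piF μ u₀ u t' y := by
    intro t'
    induction t' with
    | zero => intro _ y; rw [hπ0]; rfl
    | succ t'' ih2 =>
      intro h y
      have hrec := hπrec (t''+1) (by omega) h y
      rw [Nat.add_sub_cancel] at hrec
      rw [hrec]
      show _ = TwoFilterAux.piF μ u₀ u (t''+1) y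
      simp only [TwoFilterAux.piF]
      exact lintegral_congr fun x => by rw [ih2 (by omega) x]
  intro t ht y
  show (∫⁻ z : Fin T → E,
      u₀ ((Fin.insertNth ⟨t, Nat.lt_succ_of_le ht⟩ y z : Fin (T+1) → E) 0)
        * ∏ s ∈ Finset.Icc 1 T,
            u s ((Fin.insertNth ⟨t, Nat.lt_succ_of_le ht⟩ y z : Fin (T+1) → E) ↑(s-1),
                 (Fin.insertNth ⟨t, Nat.lt_succ_of_le ht⟩ y z : Fin (T+1) → E) ↑s)
      ∂(Measure.pi fun _ : Fin T => μ)) = b t y * π t y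
  rw [TwoFilterAux.main μ t T ht u₀ hu₀ u hu y, hGb (T - t) t (by omega) y, hpi t ht y]
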